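/- Let (λ_i)_{i∈ℕ} be nonnegative reals with Σ_i λ_i < ∞, let Λ = sup_i λ_i, and let γ satisfy 0 < γ and γΛ < 1. For k ≥ 1 set s_k = Σ_i λ_i^k (finite for all k ≥ 1). Then both of the following series identities hold with absolutely convergent right-hand sides: γ^{-1} Σ_i log(1 + λ_i γ) = Σ_{k=0}^{∞} (−1)^k (s_{k+1}/(k+1)) γ^k, and Σ_i λ_i/(1 + λ_i γ) = Σ_{k=0}^{∞} (−1)^k s_{k+1} γ^k. -/

import Mathlib

/-- For nonnegative summable `(λ_i)` with `Λ = sup_i λ_i` and `0 < γ`,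
`γΛ < 1`, the Schatten sums `s_k = Σ_i λ_i^k` are finite for all `k ≥ 1`, and the causal and
noncausal errors admit the absolutely convergent power series expansions
`γ⁻¹ Σ_i log(1 + λ_i γ) = Σ_k (−1)^k (s_{k+1}/(k+1)) γ^k` and
`Σ_i λ_i/(1 + λ_i γ) = Σ_k (−1)^k s_{k+1} γ^k`. -/
theorem power_series_expansions_of_errors
    (lam : ℕ → ℝ) (hlam : ∀ i, 0 ≤ lam i) (hsum : Summable lam)
    (γ : ℝ) (hγ : 0 < γ) (hγΛ : γ * (⨆ i, lam i) < 1) :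
    (∀ k : ℕ, 1 ≤ k → Summable (fun i => lam i ^ k)) ∧
      Summable (fun k : ℕ => ((∑' i, lam i ^ (k + 1)) / ((k : ℝ) + 1)) * γ ^ k) ∧
      Summable (fun k : ℕ => (∑' i, lam i ^ (k + 1)) * γ ^ k) ∧
      γ⁻¹ * ∑' i, Real.log (1 + lam i * γ)
        = ∑' k : ℕ, (-1 : ℝ) ^ k * ((∑' i, lam i ^ (k + 1)) / ((k : ℝ) + 1)) * γ ^ k ∧
      ∑' i, lam i / (1 + lam i * γ)
        = ∑' k : ℕ, (-1 : ℝ) ^ k * (∑' i, lam i ^ (k + 1)) * γ ^ k := by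
  set Λ := ⨆ i, lam i with hΛdef
  have hbdd : BddAbove (Set.range lam) := by
    refine ⟨∑' j, lam j, ?_⟩
    rintro x ⟨i, rfl⟩
    exact hsum.le_tsum i fun j _ => hlam j
  have hle : ∀ i, lam i ≤ Λ := fun i => le_ciSup hbdd i
  have hΛ0 : 0 ≤ Λ := le_trans (hlam 0) (hle 0)
  set q := γ * Λ with hqdef
  have hq0 : 0 ≤ q := mul_nonneg hγ.le hΛ0
  have hq1 : q < 1 := hγΛ
  have hx0 : ∀ i, 0 ≤ lam i * γ := fun i => mul_nonneg (hlam i) hγ.le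
  have hxq : ∀ i, lam i * γ ≤ q := fun i => by
    rw [hqdef, mul_comm γ Λ]
    exact mul_le_mul_of_nonneg_right (hle i) hγ.le
  have hx1 : ∀ i, lam i * γ < 1 := fun i => lt_of_le_of_lt (hxq i) hq1
  have hpos : ∀ i, (0:ℝ) < 1 + lam i * γ := fun i => by nlinarith [hx0 i]
  -- summability of powers
  have hpow1 : ∀ m : ℕ, Summable (fun i => lam i ^ (m + 1)) := by
    intro m
    refine Summable.of_nonneg_of_le (fun i => pow_nonneg (hlam i) _)
      (fun i => ?_) (hsum.mul_right (Λ ^ m))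
    calc lam i ^ (m + 1) = lam i * lam i ^ m := by ring
      _ ≤ lam i * Λ ^ m :=
        mul_le_mul_of_nonneg_left (pow_le_pow_left₀ (hlam i) (hle i) m) (hlam i)
  have hpow : ∀ k : ℕ, 1 ≤ k → Summable (fun i => lam i ^ k) := by
    intro k hk
    obtain ⟨m, rfl⟩ := Nat.exists_eq_add_of_le hk
    simpa [Nat.add_comm] using hpow1 m
  -- bound on the Schatten sums
  have hs0 : ∀ m : ℕ, 0 ≤ ∑' i, lam i ^ (m + 1) :=
    fun m => tsum_nonneg fun i => pow_nonneg (hlam i) _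
  have hs_le : ∀ m : ℕ, (∑' i, lam i ^ (m + 1)) * γ ^ m ≤ (∑' j, lam j) * q ^ m := by
    intro m
    have h1 : (∑' i, lam i ^ (m + 1)) ≤ ∑' i, lam i * Λ ^ m := by
      refine Summable.tsum_le_tsum (fun i => ?_) (hpow1 m) (hsum.mul_right _)
      calc lam i ^ (m + 1) = lam i * lam i ^ m := by ring
        _ ≤ lam i * Λ ^ m :=
          mul_le_mul_of_nonneg_left (pow_le_pow_left₀ (hlam i) (hle i) m) (hlam i)
    have h2 : (∑' i, lam i * Λ ^ m) = (∑' j, lam j) * Λ ^ m := tsum_mul_right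
    calc (∑' i, lam i ^ (m + 1)) * γ ^ m ≤ ((∑' j, lam j) * Λ ^ m) * γ ^ m := by
          refine mul_le_mul_of_nonneg_right ?_ (pow_nonneg hγ.le m)
          rw [← h2]; exact h1
      _ = (∑' j, lam j) * q ^ m := by rw [hqdef, mul_pow]; ring
  have hgeo : Summable (fun k : ℕ => (∑' j, lam j) * q ^ k) :=
    (summable_geometric_of_lt_one hq0 hq1).mul_left _
  have hsum3 : Summable (fun k : ℕ => (∑' i, lam i ^ (k + 1)) * γ ^ k) := by
    refine Summable.of_nonneg_of_le
      (fun k => mul_nonneg (hs0 k) (pow_nonneg hγ.le k)) (fun k => hs_le k) hgeo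
  have hsum2 : Summable (fun k : ℕ => ((∑' i, lam i ^ (k + 1)) / ((k : ℝ) + 1)) * γ ^ k) := by
    refine Summable.of_nonneg_of_le
      (fun k => mul_nonneg (div_nonneg (hs0 k) (by positivity)) (pow_nonneg hγ.le k))
      (fun k => ?_) hsum3
    refine mul_le_mul_of_nonneg_right ?_ (pow_nonneg hγ.le k)
    exact div_le_self (hs0 k) (by push_cast; linarith [Nat.cast_nonneg (α := ℝ) k])
  -- the two double series
  -- F k i for the log series, G k i for the geometric series
  set F : ℕ → ℕ → ℝ := fun k i => ((-1 : ℝ) ^ k * γ ^ (k + 1) / ((k : ℝ) + 1)) * lam i ^ (k + 1)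
    with hFdef
  set G : ℕ → ℕ → ℝ := fun k i => ((-1 : ℝ) ^ k * γ ^ k) * lam i ^ (k + 1) with hGdef
  have hprod : Summable (fun p : ℕ × ℕ => q ^ p.1 * lam p.2) :=
    Summable.mul_of_nonneg (summable_geometric_of_lt_one hq0 hq1) hsum
      (fun k => pow_nonneg hq0 k) hlam
  have habs_bound : ∀ (k i : ℕ), (lam i * γ) ^ (k + 1) ≤ q ^ k * (lam i * γ) := by
    intro k i
    calc (lam i * γ) ^ (k + 1) = (lam i * γ) ^ k * (lam i * γ) := by ring
      _ ≤ q ^ k * (lam i * γ) :=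
        mul_le_mul_of_nonneg_right (pow_le_pow_left₀ (hx0 i) (hxq i) k) (hx0 i)
  have hFsummable : Summable (Function.uncurry F) := by
    refine Summable.of_norm_bounded
      (hprod.mul_right γ) ?_
    rintro ⟨k, i⟩
    have h1 : |Function.uncurry F (k, i)| = γ ^ (k + 1) / ((k : ℝ) + 1) * lam i ^ (k + 1) := by
      simp only [Function.uncurry, hFdef]
      rw [abs_mul, abs_div, abs_mul, abs_pow, abs_pow, abs_neg, abs_one, one_pow, one_mul,
        abs_of_nonneg hγ.le, abs_of_nonneg (by positivity : (0:ℝ) ≤ (k:ℝ) + 1),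
        abs_of_nonneg (pow_nonneg (hlam i) _)]
    rw [Real.norm_eq_abs, h1]
    have h2 : γ ^ (k + 1) / ((k : ℝ) + 1) * lam i ^ (k + 1) ≤ (lam i * γ) ^ (k + 1) := by
      rw [mul_pow]
      rw [div_mul_eq_mul_div, div_le_iff₀ (by positivity : (0:ℝ) < (k:ℝ) + 1)]
      nlinarith [mul_nonneg (pow_nonneg hγ.le (k+1)) (pow_nonneg (hlam i) (k+1)),
        Nat.cast_nonneg (α := ℝ) k]
    calc γ ^ (k + 1) / ((k : ℝ) + 1) * lam i ^ (k + 1) ≤ (lam i * γ) ^ (k + 1) := h2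
      _ ≤ q ^ k * (lam i * γ) := habs_bound k i
      _ = q ^ k * lam i * γ := by ring
  have hGsummable : Summable (Function.uncurry G) := by
    refine Summable.of_norm_bounded hprod ?_
    rintro ⟨k, i⟩
    have h1 : |Function.uncurry G (k, i)| = γ ^ k * lam i ^ (k + 1) := by
      simp only [Function.uncurry, hGdef]
      rw [abs_mul, abs_mul, abs_pow, abs_pow, abs_neg, abs_one, one_pow, one_mul,
        abs_of_nonneg hγ.le, abs_of_nonneg (pow_nonneg (hlam i) _)]
    rw [Real.norm_eq_abs, h1, ← mul_le_mul_iff_left₀ hγ]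
    have h2 : γ ^ k * lam i ^ (k + 1) * γ = (lam i * γ) ^ (k + 1) := by rw [mul_pow]; ring
    rw [h2]
    calc (lam i * γ) ^ (k + 1) ≤ q ^ k * (lam i * γ) := habs_bound k i
      _ = q ^ k * lam i * γ := by ring
  -- pointwise HasSum in  i
  have hFlog : ∀ i, HasSum (fun k => F k i) (Real.log (1 + lam i * γ)) := by
    intro i
    have habs : |(-(lam i * γ))| < 1 := by
      rw [abs_neg, abs_of_nonneg (hx0 i)]; exact hx1 i
    have h := (Real.hasSum_pow_div_log_of_abs_lt_one habs).neg
    have heq : (fun n : ℕ => -((-(lam i * γ)) ^ (n + 1) / ((n : ℝ) + 1))) = fun n => F n i := by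
      funext n
      simp only [hFdef]
      rw [neg_pow, mul_pow]
      ring
    rw [heq] at h
    have : (1 : ℝ) - -(lam i * γ) = 1 + lam i * γ := by ring
    rw [this] at h
    simpa using h
  have hGgeom : ∀ i, HasSum (fun k => G k i) (lam i / (1 + lam i * γ)) := by
    intro i
    have habs : |(-(lam i * γ))| < 1 := by
      rw [abs_neg, abs_of_nonneg (hx0 i)]; exact hx1 i
    have h := (hasSum_geometric_of_abs_lt_one habs).mul_left (lam i)
    have heq : (fun n : ℕ => lam i * (-(lam i * γ)) ^ n) = fun n => G n i := by
      funext n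
      simp only [hGdef]
      rw [neg_pow, mul_pow]
      ring
    rw [heq] at h
    have : lam i * (1 - -(lam i * γ))⁻¹ = lam i / (1 + lam i * γ) := by
      rw [div_eq_mul_inv]; ring_nf
    rw [this] at h
    exact h
  -- swap sums
  have hswapF : ∑' i, ∑' k, F k i = ∑' k, ∑' i, F k i := Summable.tsum_comm hFsummable
  have hswapG : ∑' i, ∑' k, G k i = ∑' k, ∑' i, G k i := Summable.tsum_comm hGsummable
  refine ⟨hpow, hsum2, hsum3, ?_, ?_⟩
  · -- causal
    have h1 : ∑' i, Real.log (1 + lam i * γ) = ∑' i, ∑' k, F k i :=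
      tsum_congr fun i => (hFlog i).tsum_eq.symm
    have h2 : ∀ k : ℕ, ∑' i, F k i
        = ((-1 : ℝ) ^ k * γ ^ (k + 1) / ((k : ℝ) + 1)) * ∑' i, lam i ^ (k + 1) := by
      intro k; exact tsum_mul_left
    rw [h1, hswapF]
    rw [← tsum_mul_left]
    refine tsum_congr fun k => ?_
    rw [h2 k]
    have hk1 : ((k : ℝ) + 1) ≠ 0 := by positivity
    field_simp
    ring
  · -- noncausal
    have h1 : ∑' i, lam i / (1 + lam i * γ) = ∑' i, ∑' k, G k i :=
      tsum_congr fun i => (hGgeom i).tsum_eq.symm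
    have h2 : ∀ k : ℕ, ∑' i, G k i
        = ((-1 : ℝ) ^ k * γ ^ k) * ∑' i, lam i ^ (k + 1) := by
      intro k; exact tsum_mul_left
    rw [h1, hswapG]
    refine tsum_congr fun k => ?_
    rw [h2 k]
    ring
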